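/- With Ω = [0,1], uniform density, two APs with weights a_1, a_2 > 0, one FC, and β' = βκ > 0, the optimal two-tier power using both APs, ((4β'+1)/(12(β'+1)))·(√(a_1a_2)/(√a_1+√a_2))², is strictly less than min(a_1, a_2)/12 (the power using only the stronger AP collocated with the FC at the centroid) if and only if √((4β'+1)/(β'+1)) − 1 < √(a_1/a_2) < 1/(√((4β'+1)/(β'+1)) − 1). -/

import Mathlib

/-- Using both APs beats using only the stronger AP iff the
usefulness condition on √(a₁/a₂) holds (strict version). -/
theorem two_ap_usefulness_iff
    (a1 a2 β' : ℝ) (ha1 : 0 < a1) (ha2 : 0 < a2) (hβ : 0 < β') :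
    ((4 * β' + 1) / (12 * (β' + 1)))
        * (Real.sqrt (a1 * a2) / (Real.sqrt a1 + Real.sqrt a2)) ^ 2
      < min a1 a2 / 12
    ↔ (Real.sqrt ((4 * β' + 1) / (β' + 1)) - 1 < Real.sqrt (a1 / a2)
        ∧ Real.sqrt (a1 / a2)
            < 1 / (Real.sqrt ((4 * β' + 1) / (β' + 1)) - 1)) := by
  set s1 := Real.sqrt a1 with hs1
  set s2 := Real.sqrt a2 with hs2
  set t := Real.sqrt ((4 * β' + 1) / (β' + 1)) with ht
  have hs1p : 0 < s1 := Real.sqrt_pos.mpr ha1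
  have hs2p : 0 < s2 := Real.sqrt_pos.mpr ha2
  have hsum : 0 < s1 + s2 := by linarith
  have hmul : Real.sqrt (a1 * a2) = s1 * s2 := Real.sqrt_mul ha1.le a2
  have hdiv : Real.sqrt (a1 / a2) = s1 / s2 := Real.sqrt_div ha1.le a2
  have hβ1 : 0 < β' + 1 := by linarith
  have hc : (1:ℝ) < (4 * β' + 1) / (β' + 1) := (one_lt_div hβ1).mpr (by linarith)
  have ht2 : t ^ 2 = (4 * β' + 1) / (β' + 1) := Real.sq_sqrt (by positivity)
  have htnn : 0 ≤ t := Real.sqrt_nonneg _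
  have htp : 1 < t := by nlinarith
  have hu : 0 < t - 1 := by linarith
  have ha1s : a1 = s1 ^ 2 := (Real.sq_sqrt ha1.le).symm
  have ha2s : a2 = s2 ^ 2 := (Real.sq_sqrt ha2.le).symm
  have hmin : min a1 a2 = (min s1 s2) ^ 2 := by
    rcases le_total a1 a2 with h | h
    · rw [min_eq_left h, min_eq_left (Real.sqrt_le_sqrt h)]; exact ha1s
    · rw [min_eq_right h, min_eq_right (Real.sqrt_le_sqrt h)]; exact ha2s
  rw [hmul, hdiv, hmin]
  have key : ((4 * β' + 1) / (12 * (β' + 1))) * (s1 * s2 / (s1 + s2)) ^ 2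
      < (min s1 s2) ^ 2 / 12 ↔ t * (s1 * s2 / (s1 + s2)) < min s1 s2 := by
    have heq : ((4 * β' + 1) / (12 * (β' + 1))) * (s1 * s2 / (s1 + s2)) ^ 2
        = (t * (s1 * s2 / (s1 + s2))) ^ 2 / 12 := by
      rw [mul_pow, ht2]; field_simp
    rw [heq, div_lt_div_iff_of_pos_right (by norm_num : (0:ℝ) < 12)]
    exact pow_lt_pow_iff_left₀ (by positivity) (le_min hs1p.le hs2p.le) (by norm_num)
  rw [key, lt_min_iff]
  have e1 : t * (s1 * s2 / (s1 + s2)) < s1 ↔ t - 1 < s1 / s2 := by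
    rw [← mul_div_assoc, div_lt_iff₀ hsum, lt_div_iff₀ hs2p]
    constructor <;> intro h <;> nlinarith [mul_pos hs1p hs2p]
  have e2 : t * (s1 * s2 / (s1 + s2)) < s2 ↔ s1 / s2 < 1 / (t - 1) := by
    rw [← mul_div_assoc, div_lt_iff₀ hsum, div_lt_div_iff₀ hs2p hu]
    constructor <;> intro h <;> nlinarith [mul_pos hs2p hs2p]
  rw [e1, e2]
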